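/- Let N : (0,∞) → [0,∞) be a nondecreasing function, and let n, p > 0. Suppose that for every pair λ, μ > 0 and every M ∈ ℕ such that M disjoint open cubes of side length (λ/μ)^{1/p} can be packed into the unit cube (equivalently M ≤ ⌊(μ/λ)^{1/p}⌋ⁿ when taking M maximal), the superadditivity N(μ) ≥ M · N(λ) holds with M = ⌊(μ/λ)^{1/p}⌋ⁿ. If additionally there exist constants 0 < C₁ ≤ C₂ with C₁λ^{n/p} ≤ N(λ) ≤ C₂λ^{n/p} for all large λ, then the limit lim_{λ→∞} λ^{-n/p} N(λ) exists and lies in [C₁, C₂]. -/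

import Mathlib

open Filter

theorem weyl_limit_exists_of_packing (n p : ℝ) (hn : 0 < n) (hp : 0 < p)
    (N : ℝ → ℝ) (hN0 : ∀ lam : ℝ, 0 < lam → 0 ≤ N lam)
    (hmono : ∀ lam mu : ℝ, 0 < lam → lam ≤ mu → N lam ≤ N mu)
    (hpack : ∀ lam mu : ℝ, 0 < lam → 0 < mu →
      ((⌊(mu / lam) ^ (1 / p)⌋₊ : ℝ)) ^ n * N lam ≤ N mu)
    (C₁ C₂ Λ : ℝ) (hC₁ : 0 < C₁) (hC₁₂ : C₁ ≤ C₂)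
    (hgrowth : ∀ lam : ℝ, Λ ≤ lam →
      C₁ * lam ^ (n / p) ≤ N lam ∧ N lam ≤ C₂ * lam ^ (n / p)) :
    ∃ L ∈ Set.Icc C₁ C₂,
      Tendsto (fun lam : ℝ => lam ^ (-(n / p)) * N lam) atTop (nhds L) := by
  set f : ℝ → ℝ := fun lam => lam ^ (-(n / p)) * N lam with hf
  -- eventual bounds
  have hub : ∀ᶠ lam in atTop, f lam ≤ C₂ := by
    filter_upwards [eventually_ge_atTop (max Λ 1)] with lam hl
    have h1 : (1:ℝ) ≤ lam := le_trans (le_max_right _ _) hl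
    have hl0 : (0:ℝ) < lam := lt_of_lt_of_le one_pos h1
    have h2 := (hgrowth lam (le_trans (le_max_left _ _) hl)).2
    have hne : lam ^ (-(n / p)) * lam ^ (n / p) = 1 := by
      rw [← Real.rpow_add hl0]; simp
    calc f lam ≤ lam ^ (-(n / p)) * (C₂ * lam ^ (n / p)) := by
          exact mul_le_mul_of_nonneg_left h2 (Real.rpow_nonneg hl0.le _)
      _ = C₂ * (lam ^ (-(n / p)) * lam ^ (n / p)) := by ring
      _ = C₂ := by rw [hne, mul_one]
  have hlb : ∀ᶠ lam in atTop, C₁ ≤ f lam := by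
    filter_upwards [eventually_ge_atTop (max Λ 1)] with lam hl
    have h1 : (1:ℝ) ≤ lam := le_trans (le_max_right _ _) hl
    have hl0 : (0:ℝ) < lam := lt_of_lt_of_le one_pos h1
    have h2 := (hgrowth lam (le_trans (le_max_left _ _) hl)).1
    have hne : lam ^ (-(n / p)) * lam ^ (n / p) = 1 := by
      rw [← Real.rpow_add hl0]; simp
    calc C₁ = C₁ * (lam ^ (-(n / p)) * lam ^ (n / p)) := by rw [hne, mul_one]
      _ = lam ^ (-(n / p)) * (C₁ * lam ^ (n / p)) := by ring
      _ ≤ f lam := mul_le_mul_of_nonneg_left h2 (Real.rpow_nonneg hl0.le _)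
  have hbdd_le : atTop.IsBoundedUnder (· ≤ ·) f := isBoundedUnder_of_eventually_le hub
  have hbdd_ge : atTop.IsBoundedUnder (· ≥ ·) f := isBoundedUnder_of_eventually_ge hlb
  have hcob_ge : atTop.IsCoboundedUnder (· ≥ ·) f := hbdd_le.isCoboundedUnder_ge
  have hcob_le : atTop.IsCoboundedUnder (· ≤ ·) f := hbdd_ge.isCoboundedUnder_le
  set l : ℝ := atTop.liminf f with hldef
  -- key inequality: f lam ≤ l for all lam > 0
  have hkey : ∀ lam : ℝ, 0 < lam → f lam ≤ l := by
    intro lam hlam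
    set r : ℝ → ℝ := fun mu => (mu / lam) ^ (1 / p) with hr
    have htr : Tendsto r atTop atTop :=
      (tendsto_rpow_atTop (by positivity)).comp (tendsto_id.atTop_div_const hlam)
    set g : ℝ → ℝ := fun mu => ((⌊r mu⌋₊ : ℝ) / r mu) ^ n * f lam with hg
    have h1 : Tendsto (fun mu => (⌊r mu⌋₊ : ℝ) / r mu) atTop (nhds 1) :=
      tendsto_nat_floor_div_atTop.comp htr
    have h2 : Tendsto (fun mu => ((⌊r mu⌋₊ : ℝ) / r mu) ^ n) atTop (nhds 1) := by
      have := ((Real.continuousAt_rpow_const 1 n (Or.inl one_ne_zero)).tendsto).comp h1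
      simpa [Function.comp_def, Real.one_rpow] using this
    have htend : Tendsto g atTop (nhds (f lam)) := by
      simpa using h2.mul_const (f lam)
    have hineq : ∀ᶠ mu in atTop, g mu ≤ f mu := by
      filter_upwards [eventually_ge_atTop (max lam 1)] with mu hmu
      have hmul : lam ≤ mu := le_trans (le_max_left _ _) hmu
      have hmu0 : (0:ℝ) < mu := lt_of_lt_of_le one_pos (le_trans (le_max_right _ _) hmu)
      have hq0 : (0:ℝ) < mu / lam := div_pos hmu0 hlam
      have hr0 : 0 < r mu := Real.rpow_pos_of_pos hq0 _
      -- r mu ^ n = (mu/lam)^(n/p)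
      have hrn : r mu ^ n = (mu / lam) ^ (n / p) := by
        show ((mu / lam) ^ (1 / p)) ^ n = _
        rw [← Real.rpow_mul hq0.le, one_div_mul_eq_div]
      have hsplit : lam ^ (-(n / p)) / (mu / lam) ^ (n / p) = mu ^ (-(n / p)) := by
        rw [div_eq_mul_inv, ← Real.rpow_neg hq0.le, ← Real.mul_rpow hlam.le hq0.le]
        have h : lam * (mu / lam) = mu := by field_simp
        rw [h]
      have hdiv : ((⌊r mu⌋₊ : ℝ) / r mu) ^ n = (⌊r mu⌋₊ : ℝ) ^ n / r mu ^ n :=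
        Real.div_rpow (Nat.cast_nonneg _) hr0.le n
      have hcalc : g mu = mu ^ (-(n / p)) * ((⌊r mu⌋₊ : ℝ) ^ n * N lam) := by
        show ((⌊r mu⌋₊ : ℝ) / r mu) ^ n * (lam ^ (-(n / p)) * N lam) = _
        rw [hdiv, hrn, ← hsplit]; ring
      rw [hcalc]
      show _ ≤ mu ^ (-(n / p)) * N mu
      exact mul_le_mul_of_nonneg_left (hpack lam mu hlam hmu0) (Real.rpow_nonneg hmu0.le _)
    have : f lam = atTop.liminf g := (htend.liminf_eq).symm
    rw [this]
    exact liminf_le_liminf hineq htend.isBoundedUnder_ge hcob_ge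
  -- bounds on l
  have hC₁l : C₁ ≤ l := le_liminf_of_le hcob_ge hlb
  have hlC₂ : l ≤ C₂ := liminf_le_of_frequently_le hub.frequently hbdd_ge
  have hsup_le : atTop.limsup f ≤ l := by
    apply limsup_le_of_le hcob_le
    filter_upwards [eventually_ge_atTop (1:ℝ)] with lam hl
    exact hkey lam (lt_of_lt_of_le one_pos hl)
  have hle_sup : l ≤ atTop.limsup f := liminf_le_limsup hbdd_le hbdd_ge
  exact ⟨l, ⟨hC₁l, hlC₂⟩,
    tendsto_of_liminf_eq_limsup rfl (le_antisymm hsup_le hle_sup) hbdd_le hbdd_ge⟩
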